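/- For each integer N ≥ 1 and m > 0, the equation y^N/(N-1)! + Σ_{j=0}^{N-1} y^j/j! = e^y has exactly one solution y > 0 when N ≥ 2. -/

import Mathlib

open Finset

private lemma aux_summable (N : ℕ) (y : ℝ) (hy : 0 ≤ y) :
    Summable (fun k : ℕ => y ^ k / (Nat.factorial (k + N) : ℝ)) := by
  refine Summable.of_nonneg_of_le (fun k => by positivity) (fun k => ?_)
    (Real.summable_pow_div_factorial y)
  have h1 : (0:ℝ) < (Nat.factorial k : ℝ) := by exact_mod_cast Nat.factorial_pos k
  have h2 : (Nat.factorial k : ℝ) ≤ (Nat.factorial (k + N) : ℝ) := by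
    exact_mod_cast Nat.factorial_le (Nat.le_add_right k N)
  have h3 : (0:ℝ) ≤ y ^ k := pow_nonneg hy k
  gcongr

private lemma aux_key (N : ℕ) (y : ℝ) (hy : 0 < y) :
    (y ^ N / (Nat.factorial (N - 1) : ℝ) +
        ∑ j ∈ Finset.range N, y ^ j / (Nat.factorial j : ℝ) = Real.exp y)
    ↔ (∑' k : ℕ, y ^ k / (Nat.factorial (k + N) : ℝ))
        = 1 / (Nat.factorial (N - 1) : ℝ) := by
  have hsum := Real.summable_pow_div_factorial y
  have hexp : Real.exp y = ∑ j ∈ range N, y ^ j / (Nat.factorial j : ℝ)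
      + y ^ N * ∑' k : ℕ, y ^ k / (Nat.factorial (k + N) : ℝ) := by
    rw [Real.exp_eq_exp_ℝ, NormedSpace.exp_eq_tsum_div]
    dsimp only
    rw [← Summable.sum_add_tsum_nat_add N hsum]
    congr 1
    rw [← tsum_mul_left]
    congr 1 with k
    rw [pow_add]; ring
  rw [hexp]
  constructor
  · intro h
    have h2 : y ^ N * (1 / (Nat.factorial (N - 1) : ℝ))
        = y ^ N * ∑' k : ℕ, y ^ k / (Nat.factorial (k + N) : ℝ) := by
      rw [mul_one_div]; linarith
    exact (mul_left_cancel₀ (pow_ne_zero N hy.ne') h2).symm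
  · intro h
    rw [h, mul_one_div]; ring

private lemma aux_mono (N : ℕ) {a b : ℝ} (ha : 0 ≤ a) (hab : a < b) :
    (∑' k : ℕ, a ^ k / (Nat.factorial (k + N) : ℝ))
      < ∑' k : ℕ, b ^ k / (Nat.factorial (k + N) : ℝ) := by
  have hb : 0 ≤ b := ha.trans hab.le
  refine Summable.tsum_lt_tsum_of_nonneg (fun k => by positivity) (fun k => ?_) (i := 1) ?_
    (aux_summable N b hb)
  · have h1 : (0:ℝ) < (Nat.factorial (k + N) : ℝ) := by exact_mod_cast Nat.factorial_pos _
    have h2 : a ^ k ≤ b ^ k := pow_le_pow_left₀ ha hab.le k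
    gcongr
  · have hfac : (0 : ℝ) < (Nat.factorial (1 + N) : ℝ) := by
      exact_mod_cast Nat.factorial_pos _
    rw [pow_one, pow_one, div_lt_div_iff₀ hfac hfac]
    exact mul_lt_mul_of_pos_right hab hfac

/-- For `N ≥ 2`, `y^N/(N-1)! + ∑_{j<N} y^j/j! = e^y` has exactly one positive root. -/
theorem stmt_9 (N : ℕ) (hN : 2 ≤ N) :
    ∃! y : ℝ, 0 < y ∧
      y ^ N / (Nat.factorial (N - 1) : ℝ) +
          ∑ j ∈ Finset.range N, y ^ j / (Nat.factorial j : ℝ)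
        = Real.exp y := by
  have hN1 : (N - 1) + 1 = N := Nat.sub_add_cancel (by omega)
  have hcpos : (0 : ℝ) < (Nat.factorial (N - 1) : ℝ) := by exact_mod_cast Nat.factorial_pos _
  have hNfac : (Nat.factorial N : ℝ) = N * (Nat.factorial (N - 1) : ℝ) := by
    conv_lhs => rw [← hN1]
    rw [Nat.factorial_succ]
    push_cast [hN1]
    ring
  have hNR : (2 : ℝ) ≤ (N : ℝ) := by exact_mod_cast hN
  -- the continuous function whose zero we seek
  set F : ℝ → ℝ := fun y => y ^ N / (Nat.factorial (N - 1) : ℝ)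
      + ∑ j ∈ Finset.range N, y ^ j / (Nat.factorial j : ℝ) - Real.exp y with hF
  have hFcont : Continuous F := by
    apply Continuous.sub
    · apply Continuous.add
      · exact (continuous_pow N).div_const _
      · exact continuous_finset_sum _ (fun j _ => (continuous_pow j).div_const _)
    · exact Real.continuous_exp
  -- F 1 > 0
  have hF1 : 0 < F 1 := by
    have hb := Real.exp_bound' (by norm_num : (0:ℝ) ≤ 1) le_rfl (n := N) (by omega)
    simp only [one_pow] at hb
    have hlt : (1 : ℝ) * (N + 1) / (Nat.factorial N * N) < 1 / (Nat.factorial (N - 1) : ℝ) := by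
      rw [one_mul, div_lt_div_iff₀ (by positivity) hcpos, hNfac]
      nlinarith
    simp only [hF, one_pow]
    have : Real.exp 1 < ∑ j ∈ Finset.range N, (1:ℝ) ^ j / (Nat.factorial j : ℝ)
        + 1 / (Nat.factorial (N - 1) : ℝ) := by
      refine lt_of_le_of_lt hb ?_
      have he : ∑ m ∈ Finset.range N, (1:ℝ) ^ m / (Nat.factorial m : ℝ)
          = ∑ m ∈ Finset.range N, 1 / (Nat.factorial m : ℝ) := by
        simp
      rw [he] at *
      simp only [one_pow] at *
      linarith
    linarith
  -- F M < 0 where M = N*(N+1)+1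
  set M : ℝ := (N : ℝ) * ((N : ℝ) + 1) + 1 with hM
  have hMpos : (0 : ℝ) < M := by positivity
  have hFM : F M < 0 := by
    have hb := Real.sum_le_exp_of_nonneg (x := M) hMpos.le (N + 2)
    have hsplit : ∑ i ∈ Finset.range (N + 2), M ^ i / (Nat.factorial i : ℝ)
        = ∑ i ∈ Finset.range N, M ^ i / (Nat.factorial i : ℝ)
          + M ^ N / (Nat.factorial N : ℝ) + M ^ (N + 1) / (Nat.factorial (N + 1) : ℝ) := by
      rw [Finset.sum_range_succ, Finset.sum_range_succ]
    have hkey : M ^ N / (Nat.factorial (N - 1) : ℝ) < M ^ (N + 1) / (Nat.factorial (N + 1) : ℝ) := by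
      have hfacN1 : (Nat.factorial (N + 1) : ℝ)
          = ((N : ℝ) + 1) * (N : ℝ) * (Nat.factorial (N - 1) : ℝ) := by
        rw [Nat.factorial_succ]
        push_cast [hNfac]
        ring
      rw [hfacN1, pow_succ, div_lt_div_iff₀ hcpos (by positivity)]
      have hMN : (N : ℝ) * ((N : ℝ) + 1) < M := by rw [hM]; linarith
      have hMpow : (0 : ℝ) < M ^ N := pow_pos hMpos N
      nlinarith [mul_lt_mul_of_pos_right hMN (mul_pos hMpow hcpos)]
    have hNfacpos : (0 : ℝ) < (Nat.factorial N : ℝ) := by exact_mod_cast Nat.factorial_pos _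
    have hMNnn : (0 : ℝ) ≤ M ^ N / (Nat.factorial N : ℝ) := by positivity
    simp only [hF]
    rw [hsplit] at hb
    linarith
  -- existence via IVT
  have h1M : (1 : ℝ) ≤ M := by nlinarith
  have hIVT : (0 : ℝ) ∈ F '' Set.Ioo 1 M := by
    apply intermediate_value_Ioo' h1M hFcont.continuousOn
    exact ⟨hFM, hF1⟩
  obtain ⟨y, hyIoo, hyF⟩ := hIVT
  have hypos : 0 < y := lt_trans zero_lt_one hyIoo.1
  have hyeq : y ^ N / (Nat.factorial (N - 1) : ℝ)
      + ∑ j ∈ Finset.range N, y ^ j / (Nat.factorial j : ℝ) = Real.exp y := by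
    have := hyF
    simp only [hF] at this
    linarith
  refine ⟨y, ⟨hypos, hyeq⟩, ?_⟩
  rintro z ⟨hzpos, hzeq⟩
  have hTy := (aux_key N y hypos).mp hyeq
  have hTz := (aux_key N z hzpos).mp hzeq
  by_contra hne
  rcases lt_or_gt_of_ne hne with h | h
  · have := aux_mono N hzpos.le h
    rw [hTy, hTz] at this
    exact lt_irrefl _ this
  · have := aux_mono N hypos.le h
    rw [hTy, hTz] at this
    exact lt_irrefl _ this
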